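/- Let m, n ∈ ℕ, let P = [m]×[n], let M : P → vec be a persistence module, and let I ∈ Int(P). Let cov(I) denote the set of intervals J ∈ Int(P) that cover I in Int(P) (i.e., J ⊋ I and no interval K satisfies J ⊋ K ⊋ I). Assume that for every nonempty S ⊆ cov(I) there exists ⋁S ∈ Int(P) that contains every member of S and is contained in every interval of P containing every member of S. Then dgm_𝕀(M)(I) = rk(M)(I) + Σ_{∅ ≠ S ⊆ cov(I)} (−1)^{|S|} · rk(M)(⋁S). -/

import Mathlib

open scoped Classical
open Module

noncomputable section

/-- A pointwise finite-dimensional persistence module over a poset `P`. -/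
structure PersMod (𝔽 : Type) [Field 𝔽] (P : Type) [PartialOrder P] where
  V : P → Type
  [iAdd : ∀ p, AddCommGroup (V p)]
  [iMod : ∀ p, Module 𝔽 (V p)]
  [iFin : ∀ p, FiniteDimensional 𝔽 (V p)]
  φ : ∀ {p q : P}, p ≤ q → (V p →ₗ[𝔽] V q)
  φ_refl : ∀ p : P, φ (le_refl p) = LinearMap.id
  φ_comp : ∀ {p q r : P} (hpq : p ≤ q) (hqr : q ≤ r),
    (φ hqr).comp (φ hpq) = φ (le_trans hpq hqr)

attribute [instance] PersMod.iAdd PersMod.iMod PersMod.iFin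

/-- A poset is connected if any two elements are joined by a finite zigzag of
comparable elements. -/
def ZigzagConnected (P : Type) [PartialOrder P] : Prop :=
  ∀ p q : P, Relation.ReflTransGen (fun a b : P => a ≤ b ∨ b ≤ a) p q

section SetNotions

variable {P : Type} [PartialOrder P]

/-- Convexity of a subset of a poset. -/
def SetConvex (I : Set P) : Prop :=
  ∀ ⦃p q r : P⦄, p ∈ I → r ∈ I → p ≤ q → q ≤ r → q ∈ I

/-- Connectedness of a subset: any two points are joined by a zigzag of
comparable elements staying inside the subset. -/
def SetZigzagConn (I : Set P) : Prop :=
  ∀ p ∈ I, ∀ q ∈ I,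
    Relation.ReflTransGen (fun a b : P => a ∈ I ∧ b ∈ I ∧ (a ≤ b ∨ b ≤ a)) p q

/-- An interval of a poset: nonempty, convex and connected. -/
def IsIntervalSet (I : Set P) : Prop :=
  I.Nonempty ∧ SetConvex I ∧ SetZigzagConn I

/-- A path-connected subposet (member of `Con(P)`): nonempty and any two of its
points are joined by a sequence in `I` in which consecutive elements are related
by the covering relation of `P`. -/
def IsPathConnIn (I : Set P) : Prop :=
  I.Nonempty ∧ ∀ p ∈ I, ∀ q ∈ I,
    Relation.ReflTransGen (fun a b : P => a ∈ I ∧ b ∈ I ∧ (a ⋖ b ∨ b ⋖ a)) p q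

lemma setConvex_univ : SetConvex (Set.univ : Set P) := by
  intro p q r _ _ _ _; trivial

end SetNotions

namespace PersMod

variable {𝔽 : Type} [Field 𝔽] {P : Type} [PartialOrder P]

/-- The limit of a persistence module: the module of compatible sections. -/
def sections (M : PersMod 𝔽 P) : Submodule 𝔽 (∀ p, M.V p) where
  carrier := {x | ∀ (p q : P) (h : p ≤ q), M.φ h (x p) = x q}
  add_mem' := by
    intro x y hx hy p q h
    simp only [Pi.add_apply, map_add]
    rw [hx p q h, hy p q h]
  zero_mem' := by intro p q h; simp
  smul_mem' := by
    intro c x hx p q h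
    simp only [Pi.smul_apply, map_smul]
    rw [hx p q h]

/-- The relations defining the colimit of a persistence module. -/
def colimRel (M : PersMod 𝔽 P) : Submodule 𝔽 (DirectSum P fun p => M.V p) :=
  Submodule.span 𝔽 {z | ∃ (p q : P) (h : p ≤ q) (v : M.V p),
    z = DirectSum.lof 𝔽 P (fun p => M.V p) q (M.φ h v)
      - DirectSum.lof 𝔽 P (fun p => M.V p) p v}

/-- The colimit of a persistence module. -/
abbrev colim (M : PersMod 𝔽 P) :=
  (DirectSum P fun p => M.V p) ⧸ M.colimRel

/-- The canonical map `lim M → colim M` factored through the value at `p`,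
i.e. `ι_p ∘ π_p`. -/
def canonicalMapAt (M : PersMod 𝔽 P) (p : P) : M.sections →ₗ[𝔽] M.colim :=
  (M.colimRel.mkQ.comp (DirectSum.lof 𝔽 P (fun q => M.V q) p)).comp
    ((LinearMap.proj p).comp M.sections.subtype)

/-- The rank of the canonical map `lim M → colim M` computed through `p`. -/
def genRankAt (M : PersMod 𝔽 P) (p : P) : ℕ :=
  finrank 𝔽 (LinearMap.range (M.canonicalMapAt p))

/-- The generalized rank of a persistence module over a (connected) poset. -/
def genRank (M : PersMod 𝔽 P) [Nonempty P] : ℕ :=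
  M.genRankAt (Classical.arbitrary P)

/-- Restriction of a persistence module to a subposet. -/
def restrict (M : PersMod 𝔽 P) (I : Set P) : PersMod 𝔽 I where
  V := fun i => M.V i.val
  φ := fun {i j} h => M.φ h
  φ_refl := fun i => M.φ_refl i.val
  φ_comp := fun hpq hqr => M.φ_comp hpq hqr

/-- The generalized rank invariant: the generalized rank of the restriction
of `M` to `I`. -/
def rkInv (M : PersMod 𝔽 P) (I : Set P) : ℕ :=
  if h : I.Nonempty then (M.restrict I).genRankAt ⟨h.choose, h.choose_spec⟩ else 0

/-- Finite direct sums of persistence modules. -/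
def dSum {F : Type} [Fintype F] (Ms : F → PersMod 𝔽 P) : PersMod 𝔽 P where
  V := fun p => ∀ i, (Ms i).V p
  φ := fun {p q} h => LinearMap.pi fun i => ((Ms i).φ h).comp (LinearMap.proj i)
  φ_refl := by
    intro p
    refine LinearMap.ext fun x => funext fun i => ?_
    simp [(Ms i).φ_refl p]
  φ_comp := by
    intro p q r hpq hqr
    refine LinearMap.ext fun x => funext fun i => ?_
    simpa using LinearMap.congr_fun ((Ms i).φ_comp hpq hqr) (x i)

/-- Binary direct sum of persistence modules. -/
def prodMod (M N : PersMod 𝔽 P) : PersMod 𝔽 P where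
  V := fun p => M.V p × N.V p
  φ := fun h => (M.φ h).prodMap (N.φ h)
  φ_refl := by
    intro p
    refine LinearMap.ext fun x => ?_
    simp [M.φ_refl p, N.φ_refl p]
  φ_comp := by
    intro p q r h1 h2
    refine LinearMap.ext fun x => ?_
    have hM := LinearMap.congr_fun (M.φ_comp h1 h2) x.1
    have hN := LinearMap.congr_fun (N.φ_comp h1 h2) x.2
    simp only [LinearMap.comp_apply] at hM hN ⊢
    simp [hM, hN]

/-- The zero persistence module. -/
def IsZero (M : PersMod 𝔽 P) : Prop := ∀ p, Subsingleton (M.V p)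

/-- Isomorphism of persistence modules. -/
def Isom (M N : PersMod 𝔽 P) : Prop :=
  ∃ e : ∀ p, M.V p ≃ₗ[𝔽] N.V p,
    ∀ (p q : P) (h : p ≤ q) (v : M.V p), e q (M.φ h v) = N.φ h (e p v)

/-- Indecomposability of a persistence module. -/
def Indecomposable (M : PersMod 𝔽 P) : Prop :=
  ¬ M.IsZero ∧
    ∀ M₁ M₂ : PersMod 𝔽 P, M.Isom (M₁.prodMod M₂) → M₁.IsZero ∨ M₂.IsZero

end PersMod

section IntervalModule

variable {P : Type} [PartialOrder P]

/-- The fiber of the interval module at `p`: all of `𝔽` if `p ∈ I`, and `0`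
otherwise. -/
def fiber (𝔽 : Type) [Field 𝔽] (I : Set P) (p : P) : Submodule 𝔽 𝔽 where
  carrier := {x | p ∈ I ∨ x = 0}
  zero_mem' := Or.inr rfl
  add_mem' := by
    rintro x y (h | rfl) (h' | rfl)
    · exact Or.inl h
    · exact Or.inl h
    · exact Or.inl h'
    · exact Or.inr (add_zero 0)
  smul_mem' := by
    rintro c x (h | rfl)
    · exact Or.inl h
    · exact Or.inr (smul_zero c)

/-- The interval module `V_I` of a convex subset `I ⊆ P`. -/
def intervalModule (𝔽 : Type) [Field 𝔽] (I : Set P) (hc : SetConvex I) :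
    PersMod 𝔽 P where
  V := fun p => fiber 𝔽 I p
  φ := fun {p q} _h =>
    LinearMap.restrict (if q ∈ I then LinearMap.id else 0)
      (by
        intro x hx
        by_cases hq : q ∈ I
        · rw [if_pos hq]; exact Or.inl hq
        · rw [if_neg hq]; exact Or.inr rfl)
  φ_refl := by
    intro p
    refine LinearMap.ext fun x => Subtype.ext ?_
    rw [LinearMap.restrict_apply]
    by_cases hp : p ∈ I
    · simp [hp]
    · rcases x.2 with h | h
      · exact absurd h hp
      · simp [hp, h]
  φ_comp := by
    intro p q r hpq hqr
    refine LinearMap.ext fun x => Subtype.ext ?_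
    simp only [LinearMap.comp_apply, LinearMap.restrict_apply]
    by_cases hr : r ∈ I <;> by_cases hq : q ∈ I <;> simp [hr, hq]
    rcases x.2 with hp | h0
    · exact absurd (hc hp hr hpq hqr) hq
    · exact h0.symm

end IntervalModule

section Grid

variable {𝔽 : Type} [Field 𝔽]

lemma le_sub_e1 (p : ℤ × ℤ) : ((p.1 - 1, p.2) : ℤ × ℤ) ≤ p :=
  Prod.le_def.mpr ⟨show p.1 - 1 ≤ p.1 by omega, le_rfl⟩

lemma le_sub_e2 (p : ℤ × ℤ) : ((p.1, p.2 - 1) : ℤ × ℤ) ≤ p :=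
  Prod.le_def.mpr ⟨le_rfl, show p.2 - 1 ≤ p.2 by omega⟩

lemma le_sub_e12_e1 (p : ℤ × ℤ) : ((p.1 - 1, p.2 - 1) : ℤ × ℤ) ≤ (p.1 - 1, p.2) :=
  Prod.le_def.mpr ⟨le_rfl, show p.2 - 1 ≤ p.2 by omega⟩

lemma le_sub_e12_e2 (p : ℤ × ℤ) : ((p.1 - 1, p.2 - 1) : ℤ × ℤ) ≤ (p.1, p.2 - 1) :=
  Prod.le_def.mpr ⟨show p.1 - 1 ≤ p.1 by omega, le_rfl⟩

/-- The `0`-th bigraded Betti number of `M : ℤ² → vec` at `p`, defined via the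
Koszul complex as the dimension of the cokernel of
`M(p-e₁) ⊕ M(p-e₂) → M(p)`. -/
def beta0 (M : PersMod 𝔽 (ℤ × ℤ)) (p : ℤ × ℤ) : ℕ :=
  finrank 𝔽
    (M.V p ⧸ LinearMap.range ((M.φ (le_sub_e1 p)).coprod (M.φ (le_sub_e2 p))))

/-- The `2`-nd bigraded Betti number of `M : ℤ² → vec` at `p`, defined via the
Koszul complex as the dimension of the intersection of the kernels of the two
structure maps out of `M(p-e₁-e₂)`. -/
def beta2 (M : PersMod 𝔽 (ℤ × ℤ)) (p : ℤ × ℤ) : ℕ :=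
  finrank 𝔽
    ↥(LinearMap.ker (M.φ (le_sub_e12_e1 p)) ⊓ LinearMap.ker (M.φ (le_sub_e12_e2 p)))

/-- The `1`-st bigraded Betti number of `M : ℤ² → vec` at `p`, via the Koszul
complex characterization. -/
def beta1 (M : PersMod 𝔽 (ℤ × ℤ)) (p : ℤ × ℤ) : ℤ :=
  (beta0 M p : ℤ) + (beta2 M p : ℤ)
    - (finrank 𝔽 (M.V p) : ℤ) + (finrank 𝔽 (M.V (p.1 - 1, p.2)) : ℤ)
    + (finrank 𝔽 (M.V (p.1, p.2 - 1)) : ℤ) - (finrank 𝔽 (M.V (p.1 - 1, p.2 - 1)) : ℤ)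

/-- The maximal element of the grid `[m] × [n]` below a point `p ≥ (0,0)` of `ℤ²`. -/
def clamp (m n : ℕ) (p : ℤ × ℤ) : Fin (m + 1) × Fin (n + 1) :=
  (⟨min p.1.toNat m, Nat.lt_succ_of_le (min_le_right _ _)⟩,
   ⟨min p.2.toNat n, Nat.lt_succ_of_le (min_le_right _ _)⟩)

lemma clamp_mono {m n : ℕ} {p q : ℤ × ℤ} (h : p ≤ q) : clamp m n p ≤ clamp m n q := by
  obtain ⟨h1, h2⟩ := Prod.le_def.mp h
  refine Prod.le_def.mpr ⟨?_, ?_⟩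
  · exact Fin.mk_le_mk.mpr (min_le_min (Int.toNat_le_toNat h1) le_rfl)
  · exact Fin.mk_le_mk.mpr (min_le_min (Int.toNat_le_toNat h2) le_rfl)

/-- `M : ℤ² → vec` is encoded by `M' : [m] × [n] → vec`. -/
def IsEncodedBy {m n : ℕ} (M : PersMod 𝔽 (ℤ × ℤ))
    (M' : PersMod 𝔽 (Fin (m + 1) × Fin (n + 1))) : Prop :=
  (∀ p : ℤ × ℤ, ¬(0 ≤ p.1 ∧ 0 ≤ p.2) → Subsingleton (M.V p)) ∧
  ∃ e : ∀ p : ℤ × ℤ, 0 ≤ p.1 → 0 ≤ p.2 → (M.V p ≃ₗ[𝔽] M'.V (clamp m n p)),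
    ∀ (p q : ℤ × ℤ) (hp1 : 0 ≤ p.1) (hp2 : 0 ≤ p.2) (hq1 : 0 ≤ q.1) (hq2 : 0 ≤ q.2)
      (hpq : p ≤ q) (v : M.V p),
      e q hq1 hq2 (M.φ hpq v) = M'.φ (clamp_mono hpq) (e p hp1 hp2 v)

/-- A point `a ∈ ℤ²` "belongs" to `J ⊆ [m] × [n]` if it is a grid point lying in `J`. -/
def gridPt {m n : ℕ} (a : ℤ × ℤ) (J : Set (Fin (m + 1) × Fin (n + 1))) : Prop :=
  ∃ x ∈ J, (((x.1 : ℕ) : ℤ), ((x.2 : ℕ) : ℤ)) = a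

end Grid
/-- The set of intervals covering `I` in `Int(P)`: intervals `J ⊋ I` such that
no interval `K` satisfies `J ⊋ K ⊋ I`. -/
def covSet {P : Type} [PartialOrder P] (I : Set P) : Set (Set P) :=
  {J | IsIntervalSet J ∧ I ⊂ J ∧ ¬ ∃ K : Set P, IsIntervalSet K ∧ I ⊂ K ∧ K ⊂ J}

section AuxIE
variable {α : Type} [Fintype α]

lemma sum_subsets_neg_one_pow (C : Set α) :
    ∑ S ∈ Finset.univ.filter (fun S : Set α => S ⊆ C), (-1 : ℤ) ^ (Nat.card S)
      = if C = ∅ then 1 else 0 := by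
  have key : ∑ S ∈ Finset.univ.filter (fun S : Set α => S ⊆ C), (-1 : ℤ) ^ (Nat.card S)
      = ∑ T ∈ C.toFinset.powerset, (-1 : ℤ) ^ T.card := by
    refine Finset.sum_nbij' (fun S => S.toFinset) (fun T => (T : Set α)) ?_ ?_ ?_ ?_ ?_
    · intro S hS
      simp only [Finset.mem_filter, Finset.mem_univ, true_and] at hS
      simpa [Finset.mem_powerset, Set.toFinset_subset_toFinset] using hS
    · intro T hT
      simp only [Finset.mem_powerset] at hT
      simp only [Finset.mem_filter, Finset.mem_univ, true_and]
      intro x hx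
      simpa using hT (by simpa using hx)
    · intro S _; exact Set.coe_toFinset S
    · intro T _; simp
    · intro S _
      rw [Nat.card_coe_set_eq, Set.ncard_eq_toFinset_card']
  rw [key, Finset.sum_powerset_neg_one_pow_card]
  by_cases h : C = ∅ <;> simp [h, Set.toFinset_eq_empty]

lemma sum_nonempty_subsets_neg_one_pow (C : Set α) :
    ∑ S ∈ Finset.univ.filter (fun S : Set α => S.Nonempty ∧ S ⊆ C),
        (-1 : ℤ) ^ (Nat.card S)
      = (if C = ∅ then 1 else 0) - 1 := by
  rw [← sum_subsets_neg_one_pow C]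
  have h1 : Finset.univ.filter (fun S : Set α => S ⊆ C)
      = insert (∅ : Set α)
          (Finset.univ.filter (fun S : Set α => S.Nonempty ∧ S ⊆ C)) := by
    ext S
    simp only [Finset.mem_filter, Finset.mem_univ, true_and, Finset.mem_insert]
    constructor
    · intro h
      rcases Set.eq_empty_or_nonempty S with rfl | hne
      · exact Or.inl rfl
      · exact Or.inr ⟨hne, h⟩
    · rintro (rfl | ⟨_, h⟩)
      · exact Set.empty_subset C
      · exact h
  have h2 : (∅ : Set α) ∉ Finset.univ.filter
      (fun S : Set α => S.Nonempty ∧ S ⊆ C) := by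
    simp [Set.nonempty_iff_ne_empty]
  rw [h1, Finset.sum_insert h2]
  simp [Nat.card_eq_fintype_card]

lemma key_coeff (cov : Set α) (q : α → Prop) (d : ℤ) :
    ∑ S ∈ Finset.univ.filter (fun S : Set α => S.Nonempty ∧ S ⊆ cov),
        (-1 : ℤ) ^ (Nat.card S) * (if ∀ x ∈ S, q x then d else 0)
      = ((if {x | x ∈ cov ∧ q x} = ∅ then 1 else 0) - 1) * d := by
  rw [← sum_nonempty_subsets_neg_one_pow {x | x ∈ cov ∧ q x}, Finset.sum_mul,
    Finset.sum_filter, Finset.sum_filter]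
  refine Finset.sum_congr rfl fun S _ => ?_
  by_cases hp : S.Nonempty ∧ S ⊆ cov
  · by_cases hq : ∀ x ∈ S, q x
    · rw [if_pos hp, if_pos hq,
        if_pos ⟨hp.1, fun x hx => ⟨hp.2 hx, hq x hx⟩⟩]
    · rw [if_pos hp, if_neg hq, mul_zero,
        if_neg (fun h => hq (fun x hx => (h.2 hx).2))]
  · rw [if_neg hp, if_neg (fun h : S.Nonempty ∧ S ⊆ {x | x ∈ cov ∧ q x} =>
      hp ⟨h.1, fun x hx => (h.2 hx).1⟩)]

lemma exists_cover_subset' (Int : Set α → Prop) {I J : Set α}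
    (hJ : Int J) (hIJ : I ⊂ J) :
    ∃ K, (Int K ∧ I ⊂ K ∧ ¬ ∃ K' : Set α, Int K' ∧ I ⊂ K' ∧ K' ⊂ K) ∧ K ⊆ J := by
  set s : Set (Set α) := {K | Int K ∧ I ⊂ K ∧ K ⊆ J} with hs
  have hsne : s.Nonempty := ⟨J, hJ, hIJ, le_rfl⟩
  obtain ⟨K, hK, hmin⟩ : ∃ K ∈ s, ∀ K' ∈ s, K' ≤ K → K = K' := by
    obtain ⟨K, hK, h⟩ := (Set.toFinite s).exists_minimal hsne
    exact ⟨K, hK, fun K' hK' hle => le_antisymm (h hK' hle) hle⟩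
  refine ⟨K, ⟨hK.1, hK.2.1, ?_⟩, hK.2.2⟩
  rintro ⟨K', hK', hIK', hK'K⟩
  have : K' ∈ s := ⟨hK', hIK', hK'K.le.trans hK.2.2⟩
  exact hK'K.ne (hmin K' this hK'K.le).symm

/-- Abstract master inclusion-exclusion lemma. -/
lemma master_incl_excl (Int : Set α → Prop)
    (rk : Set α → ℤ) (dgm : Set α → ℤ) (I : Set α) (hI : Int I)
    (cov : Set (Set α))
    (hcov : cov = {J | Int J ∧ I ⊂ J ∧ ¬ ∃ K : Set α, Int K ∧ I ⊂ K ∧ K ⊂ J})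
    (vee : Set (Set α) → Set α)
    (hvee : ∀ S, S.Nonempty → S ⊆ cov →
      Int (vee S) ∧ (∀ J ∈ S, J ⊆ vee S) ∧
        ∀ K : Set α, Int K → (∀ J ∈ S, J ⊆ K) → vee S ⊆ K)
    (hdgm : ∀ I', Int I' → rk I' =
      ∑ J ∈ Finset.univ.filter (fun J : Set α => Int J ∧ I' ⊆ J), dgm J) :
    dgm I = rk I +
      ∑ S ∈ Finset.univ.filter
          (fun S : Set (Set α) => S.Nonempty ∧ S ⊆ cov),
        (-1 : ℤ) ^ (Nat.card S) * rk (vee S) := by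
  classical
  rw [hdgm I hI]
  have hveeSum : ∀ S ∈ Finset.univ.filter
        (fun S : Set (Set α) => S.Nonempty ∧ S ⊆ cov),
      rk (vee S) = ∑ J ∈ Finset.univ.filter (fun J : Set α => Int J ∧ I ⊆ J),
        (if ∀ J' ∈ S, J' ⊆ J then dgm J else 0) := by
    intro S hS
    rw [Finset.mem_filter] at hS
    obtain ⟨-, hne, hsub⟩ := hS
    obtain ⟨hvInt, hvUp, hvLub⟩ := hvee S hne hsub
    rw [hdgm _ hvInt, ← Finset.sum_filter, Finset.filter_filter]
    congr 1
    refine Finset.filter_congr fun J _ => ?_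
    constructor
    · rintro ⟨hJint, hvJ⟩
      obtain ⟨J₀, hJ₀⟩ := hne
      have hJ₀c := hsub hJ₀
      rw [hcov] at hJ₀c
      refine ⟨⟨hJint, ?_⟩, fun J' hJ' => (hvUp J' hJ').trans hvJ⟩
      exact (hJ₀c.2.1.le.trans (hvUp J₀ hJ₀)).trans hvJ
    · rintro ⟨⟨hJint, -⟩, hall⟩
      exact ⟨hJint, hvLub J hJint hall⟩
  have hre : (∑ S ∈ Finset.univ.filter
        (fun S : Set (Set α) => S.Nonempty ∧ S ⊆ cov),
        (-1 : ℤ) ^ (Nat.card S) * rk (vee S))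
      = ∑ S ∈ Finset.univ.filter
          (fun S : Set (Set α) => S.Nonempty ∧ S ⊆ cov),
        (-1 : ℤ) ^ (Nat.card S) *
          ∑ J ∈ Finset.univ.filter (fun J : Set α => Int J ∧ I ⊆ J),
            (if ∀ J' ∈ S, J' ⊆ J then dgm J else 0) :=
    Finset.sum_congr rfl fun S hS => by rw [hveeSum S hS]
  rw [hre]
  rw [show (∑ S ∈ Finset.univ.filter
        (fun S : Set (Set α) => S.Nonempty ∧ S ⊆ cov),
      (-1 : ℤ) ^ (Nat.card S) *
        ∑ J ∈ Finset.univ.filter (fun J : Set α => Int J ∧ I ⊆ J),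
          (if ∀ J' ∈ S, J' ⊆ J then dgm J else 0))
      = ∑ J ∈ Finset.univ.filter (fun J : Set α => Int J ∧ I ⊆ J),
          ∑ S ∈ Finset.univ.filter
            (fun S : Set (Set α) => S.Nonempty ∧ S ⊆ cov),
            (-1 : ℤ) ^ (Nat.card S) *
              (if ∀ J' ∈ S, J' ⊆ J then dgm J else 0) from by
    rw [← Finset.sum_comm]
    exact Finset.sum_congr rfl fun S _ => Finset.mul_sum _ _ _]
  rw [← Finset.sum_add_distrib]
  have hcoef : ∀ J ∈ Finset.univ.filter (fun J : Set α => Int J ∧ I ⊆ J),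
      (dgm J + ∑ S ∈ Finset.univ.filter
          (fun S : Set (Set α) => S.Nonempty ∧ S ⊆ cov),
          (-1 : ℤ) ^ (Nat.card S) *
            (if ∀ J' ∈ S, J' ⊆ J then dgm J else 0))
      = if J = I then dgm J else 0 := by
    intro J hJ
    rw [Finset.mem_filter] at hJ
    obtain ⟨-, hJint, hIJ⟩ := hJ
    rw [key_coeff cov (fun K => K ⊆ J) (dgm J)]
    have hempty : ({K | K ∈ cov ∧ K ⊆ J} : Set (Set α)) = ∅ ↔ J = I := by
      constructor
      · intro h
        by_contra hne
        have hIJ' : I ⊂ J := ⟨hIJ, fun h' => hne (le_antisymm h' hIJ)⟩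
        obtain ⟨K, hK, hKJ⟩ := exists_cover_subset' Int hJint hIJ'
        have : K ∈ ({K | K ∈ cov ∧ K ⊆ J} : Set (Set α)) := by
          rw [hcov]; exact ⟨hK, hKJ⟩
        rw [h] at this; exact this.elim
      · rintro rfl
        ext K
        simp only [Set.mem_setOf_eq, Set.mem_empty_iff_false, iff_false, not_and]
        intro hK hKI
        rw [hcov] at hK
        exact absurd (le_antisymm hKI hK.2.1.le) hK.2.1.ne'
    by_cases h : J = I
    · rw [if_pos (hempty.mpr h), if_pos h]; ring
    · rw [if_neg (fun hh => h (hempty.mp hh)), if_neg h]; ring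
  rw [Finset.sum_congr rfl hcoef, Finset.sum_ite_eq'
    (Finset.univ.filter (fun J : Set α => Int J ∧ I ⊆ J)) I dgm,
    if_pos (by simp [hI])]

end AuxIE

/-- The inclusion–exclusion formula of Asashiba et al. for the
`Int`-generalized persistence diagram of a module over `[m] × [n]`:
`dgm_𝕀(M)(I) = rk(M)(I) + Σ_{∅ ≠ S ⊆ cov(I)} (-1)^{|S|} rk(M)(⋁S)`, provided
the joins `⋁S` exist in `Int([m] × [n])`. -/
theorem dgmInt_inclusion_exclusion (𝔽 : Type) [Field 𝔽] (m n : ℕ)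
    (M : PersMod 𝔽 (Fin (m + 1) × Fin (n + 1)))
    (I : Set (Fin (m + 1) × Fin (n + 1))) (hI : IsIntervalSet I)
    (vee : Set (Set (Fin (m + 1) × Fin (n + 1))) → Set (Fin (m + 1) × Fin (n + 1)))
    (hvee : ∀ S, S.Nonempty → S ⊆ covSet I →
      IsIntervalSet (vee S) ∧ (∀ J ∈ S, J ⊆ vee S) ∧
        ∀ K : Set (Fin (m + 1) × Fin (n + 1)), IsIntervalSet K →
          (∀ J ∈ S, J ⊆ K) → vee S ⊆ K)
    (dgmInt : Set (Fin (m + 1) × Fin (n + 1)) → ℤ)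
    (hdgm : ∀ I' : Set (Fin (m + 1) × Fin (n + 1)), IsIntervalSet I' →
      (M.rkInv I' : ℤ) =
        ∑ᶠ (J : Set (Fin (m + 1) × Fin (n + 1))) (_ : IsIntervalSet J ∧ I' ⊆ J),
          dgmInt J) :
    dgmInt I =
      (M.rkInv I : ℤ) +
        ∑ᶠ (S : Set (Set (Fin (m + 1) × Fin (n + 1))))
          (_ : S.Nonempty ∧ S ⊆ covSet I),
          (-1 : ℤ) ^ (Nat.card S) * (M.rkInv (vee S) : ℤ) := by
  classical
  rw [show (∑ᶠ (S : Set (Set (Fin (m + 1) × Fin (n + 1))))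
        (_ : S.Nonempty ∧ S ⊆ covSet I),
        (-1 : ℤ) ^ (Nat.card S) * (M.rkInv (vee S) : ℤ))
      = ∑ S ∈ Finset.univ.filter
            (fun S : Set (Set (Fin (m + 1) × Fin (n + 1))) =>
              S.Nonempty ∧ S ⊆ covSet I),
          (-1 : ℤ) ^ (Nat.card S) * (M.rkInv (vee S) : ℤ) from
    finsum_cond_eq_sum_of_cond_iff _ (fun {x} _ => by simp)]
  refine master_incl_excl IsIntervalSet (fun J => (M.rkInv J : ℤ)) dgmInt I hI
    (covSet I) rfl vee hvee ?_
  intro I' hI'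
  show (M.rkInv I' : ℤ) = _
  rw [hdgm I' hI']
  exact finsum_cond_eq_sum_of_cond_iff _ (fun {x} _ => by simp)
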